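/- Let A, B, a, b be positive integers with a ≤ A, b ≤ B, and let G = ℤ_A × ℤ_B. If Λ ⊆ G is a spectrum of the cube Q_{a,b} = [a] × [b], then Q' + Λ is a packing of G, where Q' = [A/gcd(A,a)] × [B/gcd(B,b)]; in particular (A/gcd(A,a)) · (B/gcd(B,b)) · a · b ≤ A · B. -/

import Mathlib

/-- The cube `[a] × [b]` in `ℤ_A × ℤ_B`. -/
def cube2 (A B a b : ℕ) : Finset (ZMod A × ZMod B) :=
  Finset.image (fun v : Fin a × Fin b => (((v.1 : ℕ) : ZMod A), ((v.2 : ℕ) : ZMod B)))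
    Finset.univ

/-- The character `e_λ(x) = exp(2πi(λ₁x₁/A + λ₂x₂/B))` on `ℤ_A × ℤ_B`. -/
noncomputable def e2 (A B : ℕ) (lam x : ZMod A × ZMod B) : ℂ :=
  Complex.exp (2 * (Real.pi : ℂ) * Complex.I *
    ((lam.1.val : ℂ) * (x.1.val : ℂ) / (A : ℂ) + (lam.2.val : ℂ) * (x.2.val : ℂ) / (B : ℂ)))

/-- `Λ` is a spectrum of `E ⊆ ℤ_A × ℤ_B`. -/
def IsSpectrum2 (A B : ℕ) (E L : Finset (ZMod A × ZMod B)) : Prop :=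
  L.card = E.card ∧
  ∀ l ∈ L, ∀ m ∈ L, l ≠ m →
    ∑ x ∈ E, e2 A B l x * (starRingEnd ℂ) (e2 A B m x) = 0

/-- `S + T` is a packing of `G`: each `x` has at most one representation `x = s + t`. -/
def Packs {G : Type*} [AddCommGroup G] (S T : Finset G) : Prop :=
  ∀ x : G, ∀ p q : G × G, (p.1 ∈ S ∧ p.2 ∈ T ∧ x = p.1 + p.2) →
    (q.1 ∈ S ∧ q.2 ∈ T ∧ x = q.1 + q.2) → p = q

lemma exp_eq_one_iff' (A : ℕ) [NeZero A] (d : ℤ) :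
    Complex.exp (2 * (Real.pi : ℂ) * Complex.I * d / A) = 1 ↔ (A : ℤ) ∣ d := by
  have hA : (A : ℂ) ≠ 0 := Nat.cast_ne_zero.mpr (NeZero.ne A)
  have hpi : (Real.pi : ℂ) ≠ 0 := Complex.ofReal_ne_zero.mpr Real.pi_ne_zero
  have h2 : (2 * (Real.pi : ℂ) * Complex.I) ≠ 0 := by
    simp [hpi, Complex.I_ne_zero]
  rw [Complex.exp_eq_one_iff]
  constructor
  · rintro ⟨n, hn⟩
    refine ⟨n, ?_⟩
    have hd : (d : ℂ) = A * n := by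
      field_simp at hn
      apply mul_left_cancel₀ h2
      linear_combination (2 * (Real.pi : ℂ) * Complex.I) * hn
    exact_mod_cast hd
  · rintro ⟨n, hn⟩
    exact ⟨n, by rw [hn]; push_cast; field_simp⟩

lemma geom_zero_iff (A a : ℕ) [NeZero A] (ha : 0 < a) (d : ℤ) :
    (∑ j ∈ Finset.range a,
        Complex.exp (2 * (Real.pi : ℂ) * Complex.I * (d * j) / A)) = 0 ↔
      ((A : ℤ) ∣ a * d ∧ ¬ (A : ℤ) ∣ d) := by
  set ω := Complex.exp (2 * (Real.pi : ℂ) * Complex.I * d / A) with hω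
  have hpow : ∀ n : ℕ, ω ^ n = Complex.exp (2 * (Real.pi : ℂ) * Complex.I * (d * n) / A) := by
    intro n
    rw [hω, ← Complex.exp_nat_mul]
    congr 1
    ring
  have hsum : (∑ j ∈ Finset.range a,
      Complex.exp (2 * (Real.pi : ℂ) * Complex.I * (d * j) / A)) = ∑ j ∈ Finset.range a, ω ^ j := by
    refine Finset.sum_congr rfl fun j _ => ?_
    rw [hpow]
  have hωa : ω ^ a = 1 ↔ (A : ℤ) ∣ a * d := by
    rw [hpow, show (2 * (Real.pi : ℂ) * Complex.I * (d * a) / A)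
      = 2 * (Real.pi : ℂ) * Complex.I * ((a * d : ℤ)) / A by push_cast; ring, exp_eq_one_iff']
  have hω1 : ω = 1 ↔ (A : ℤ) ∣ d := by rw [hω, exp_eq_one_iff']
  rw [hsum]
  by_cases h1 : ω = 1
  · have hs1 : ∑ j ∈ Finset.range a, ω ^ j = a := by simp [h1]
    rw [hs1]
    simp only [Nat.cast_eq_zero]
    constructor
    · intro h; exact absurd h ha.ne'
    · rintro ⟨-, hnd⟩; exact absurd (hω1.mp h1) hnd
  · rw [geom_sum_eq h1]
    have hden : ω - 1 ≠ 0 := sub_ne_zero.mpr h1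
    rw [div_eq_zero_iff]
    simp only [hden, or_false, sub_eq_zero, hωa]
    exact ⟨fun h => ⟨h, fun hd => h1 (hω1.mpr hd)⟩, fun h => h.1⟩

lemma my_dvd_gcd_iff (A a : ℕ) (hA : 0 < A) (d : ℤ) :
    (A : ℤ) ∣ a * d ↔ ((A / Nat.gcd A a : ℕ) : ℤ) ∣ d := by
  set g := Nat.gcd A a with hg
  have hg0 : 0 < g := Nat.gcd_pos_of_pos_left a hA
  have hAg : A = g * (A / g) := (Nat.mul_div_cancel' (Nat.gcd_dvd_left A a)).symm
  have hag : a = g * (a / g) := (Nat.mul_div_cancel' (Nat.gcd_dvd_right A a)).symm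
  have hcop : IsCoprime ((A / g : ℕ) : ℤ) ((a / g : ℕ) : ℤ) :=
    Nat.isCoprime_iff_coprime.mpr (Nat.coprime_div_gcd_div_gcd hg0)
  have hgz : (g : ℤ) ≠ 0 := Int.natCast_ne_zero.mpr hg0.ne'
  have hA' : (A : ℤ) = (g : ℤ) * ((A / g : ℕ) : ℤ) := by
    exact_mod_cast congrArg (Nat.cast : ℕ → ℤ) hAg
  have ha' : (a : ℤ) = (g : ℤ) * ((a / g : ℕ) : ℤ) := by
    exact_mod_cast congrArg (Nat.cast : ℕ → ℤ) hag
  constructor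
  · rintro ⟨t, ht⟩
    have key : ((a / g : ℕ) : ℤ) * d = ((A / g : ℕ) : ℤ) * t := by
      apply mul_left_cancel₀ hgz
      calc (g : ℤ) * (((a / g : ℕ) : ℤ) * d) = (a : ℤ) * d := by rw [ha']; ring
        _ = (A : ℤ) * t := ht
        _ = (g : ℤ) * (((A / g : ℕ) : ℤ) * t) := by rw [hA']; ring
    exact hcop.dvd_of_dvd_mul_left ⟨t, key⟩
  · rintro ⟨s, hs⟩
    refine ⟨(a / g : ℕ) * s, ?_⟩
    rw [hs, hA', ha']
    push_cast
    ring

lemma cube2_inj (A B a b : ℕ) [NeZero A] [NeZero B] (haA : a ≤ A) (hbB : b ≤ B) :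
    Function.Injective
      (fun v : Fin a × Fin b => (((v.1 : ℕ) : ZMod A), ((v.2 : ℕ) : ZMod B))) := by
  intro v w h
  simp only [Prod.mk.injEq] at h
  have h1 := congrArg ZMod.val h.1
  have h2 := congrArg ZMod.val h.2
  rw [ZMod.val_cast_of_lt (lt_of_lt_of_le v.1.isLt haA),
    ZMod.val_cast_of_lt (lt_of_lt_of_le w.1.isLt haA)] at h1
  rw [ZMod.val_cast_of_lt (lt_of_lt_of_le v.2.isLt hbB),
    ZMod.val_cast_of_lt (lt_of_lt_of_le w.2.isLt hbB)] at h2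
  exact Prod.ext (Fin.ext h1) (Fin.ext h2)

lemma cube2_card (A B a b : ℕ) [NeZero A] [NeZero B] (haA : a ≤ A) (hbB : b ≤ B) :
    (cube2 A B a b).card = a * b := by
  rw [cube2, Finset.card_image_of_injective _ (cube2_inj A B a b haA hbB),
    Finset.card_univ, Fintype.card_prod, Fintype.card_fin, Fintype.card_fin]

lemma sum_factor (A B a b : ℕ) [NeZero A] [NeZero B] (haA : a ≤ A) (hbB : b ≤ B)
    (l m : ZMod A × ZMod B) :
    ∑ x ∈ cube2 A B a b, e2 A B l x * (starRingEnd ℂ) (e2 A B m x) =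
      (∑ j ∈ Finset.range a, Complex.exp
        (2 * (Real.pi : ℂ) * Complex.I * ((((l.1.val : ℤ) - (m.1.val : ℤ) : ℤ) : ℂ) * j) / A)) *
      (∑ k ∈ Finset.range b, Complex.exp
        (2 * (Real.pi : ℂ) * Complex.I * ((((l.2.val : ℤ) - (m.2.val : ℤ) : ℤ) : ℂ) * k) / B)) := by
  rw [cube2, Finset.sum_image (fun x _ y _ h => cube2_inj A B a b haA hbB h)]
  rw [Finset.sum_mul_sum]
  rw [← Finset.sum_product']
  rw [show Finset.range a ×ˢ Finset.range b
      = Finset.image (fun v : Fin a × Fin b => ((v.1 : ℕ), (v.2 : ℕ))) Finset.univ by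
    ext ⟨x, y⟩
    simp [Finset.mem_product, Fin.exists_iff]]
  rw [Finset.sum_image (by
    intro x _ y _ h
    simp only [Prod.mk.injEq] at h
    exact Prod.ext (Fin.ext h.1) (Fin.ext h.2))]
  refine Finset.sum_congr rfl fun v _ => ?_
  have hA : (A : ℂ) ≠ 0 := Nat.cast_ne_zero.mpr (NeZero.ne A)
  have hB : (B : ℂ) ≠ 0 := Nat.cast_ne_zero.mpr (NeZero.ne B)
  have hv1 : (((v.1 : ℕ) : ZMod A)).val = (v.1 : ℕ) :=
    ZMod.val_cast_of_lt (lt_of_lt_of_le v.1.isLt haA)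
  have hv2 : (((v.2 : ℕ) : ZMod B)).val = (v.2 : ℕ) :=
    ZMod.val_cast_of_lt (lt_of_lt_of_le v.2.isLt hbB)
  simp only [e2, hv1, hv2]
  rw [← Complex.exp_conj, ← Complex.exp_add, ← Complex.exp_add]
  congr 1
  simp only [map_add, map_mul, map_div₀, map_ofNat, Complex.conj_I, Complex.conj_natCast,
    Complex.conj_ofReal]
  push_cast
  field_simp
  ring

lemma coord_contra (A a' : ℕ) [NeZero A] (ha'A : a' ∣ A) (j1 j2 : ℕ)
    (hj1 : j1 < a') (hj2 : j2 < a') (l1 m1 : ZMod A)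
    (heq : (j1 : ZMod A) + l1 = (j2 : ZMod A) + m1)
    (hdvd : (a' : ℤ) ∣ (l1.val : ℤ) - (m1.val : ℤ)) (hne : l1 ≠ m1) : False := by
  have h1 : ((((l1.val : ℤ) - m1.val) - ((j2 : ℤ) - j1) : ℤ) : ZMod A) = 0 := by
    push_cast
    simp only [ZMod.natCast_val, ZMod.cast_id]
    linear_combination heq
  have h2 : (A : ℤ) ∣ ((l1.val : ℤ) - m1.val) - ((j2 : ℤ) - j1) :=
    (ZMod.intCast_zmod_eq_zero_iff_dvd _ _).mp h1
  have hAa : (a' : ℤ) ∣ (A : ℤ) := Int.natCast_dvd_natCast.mpr ha'A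
  have h3 : (a' : ℤ) ∣ ((j2 : ℤ) - j1) := by
    have h6 := dvd_sub hdvd (hAa.trans h2)
    simpa using h6
  have h4 : ((j2 : ℤ) - j1) = 0 := by
    refine Int.eq_zero_of_abs_lt_dvd h3 ?_
    rw [abs_lt]
    constructor <;> [push_cast; push_cast] <;> omega
  have h5 : (j1 : ZMod A) = (j2 : ZMod A) := by
    have : j1 = j2 := by omega
    rw [this]
  apply hne
  have heq' := heq
  rw [← h5] at heq'
  exact add_left_cancel heq'

/-- If `Λ` is a spectrum of `[a]×[b]` then `Q' + Λ` packs `ℤ_A × ℤ_B`,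
where `Q' = [A/(A,a)]×[B/(B,b)]`; in particular the packing inequality holds. -/
theorem spectrum_implies_packing (A B a b : ℕ) [NeZero A] [NeZero B]
    (ha : 0 < a) (hb : 0 < b) (haA : a ≤ A) (hbB : b ≤ B)
    (L : Finset (ZMod A × ZMod B)) (hspec : IsSpectrum2 A B (cube2 A B a b) L) :
    Packs (cube2 A B (A / Nat.gcd A a) (B / Nat.gcd B b)) L ∧
      (A / Nat.gcd A a) * (B / Nat.gcd B b) * a * b ≤ A * B := by
  have hA : 0 < A := Nat.pos_of_ne_zero (NeZero.ne A)
  have hB : 0 < B := Nat.pos_of_ne_zero (NeZero.ne B)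
  have ha'A : (A / Nat.gcd A a) ∣ A := Nat.div_dvd_of_dvd (Nat.gcd_dvd_left A a)
  have hb'B : (B / Nat.gcd B b) ∣ B := Nat.div_dvd_of_dvd (Nat.gcd_dvd_left B b)
  have key : ∀ l ∈ L, ∀ m ∈ L, l ≠ m →
      (((A / Nat.gcd A a : ℕ) : ℤ) ∣ (l.1.val : ℤ) - m.1.val ∧ l.1 ≠ m.1) ∨
      (((B / Nat.gcd B b : ℕ) : ℤ) ∣ (l.2.val : ℤ) - m.2.val ∧ l.2 ≠ m.2) := by
    intro l hl m hm hne
    have h0 := hspec.2 l hl m hm hne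
    rw [sum_factor A B a b haA hbB] at h0
    rcases mul_eq_zero.mp h0 with h | h
    · left
      obtain ⟨hd, hnd⟩ := (geom_zero_iff A a ha ((l.1.val : ℤ) - (m.1.val : ℤ))).mp h
      refine ⟨(my_dvd_gcd_iff A a hA ((l.1.val : ℤ) - (m.1.val : ℤ))).mp hd, fun hfst => hnd ?_⟩
      rw [hfst]
      simp
    · right
      obtain ⟨hd, hnd⟩ := (geom_zero_iff B b hb ((l.2.val : ℤ) - (m.2.val : ℤ))).mp h
      refine ⟨(my_dvd_gcd_iff B b hB ((l.2.val : ℤ) - (m.2.val : ℤ))).mp hd, fun hfst => hnd ?_⟩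
      rw [hfst]
      simp
  have hpack : Packs (cube2 A B (A / Nat.gcd A a) (B / Nat.gcd B b)) L := by
    intro x p q hp hq
    obtain ⟨hpS, hpL, hpx⟩ := hp
    obtain ⟨hqS, hqL, hqx⟩ := hq
    obtain ⟨v, -, hv⟩ := Finset.mem_image.mp hpS
    obtain ⟨w, -, hw⟩ := Finset.mem_image.mp hqS
    have hsum : p.1 + p.2 = q.1 + q.2 := by rw [← hpx, ← hqx]
    by_cases hlm : p.2 = q.2
    · have h1 : p.1 = q.1 := by
        rw [hlm] at hsum
        exact add_right_cancel hsum
      exact Prod.ext h1 hlm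
    · exfalso
      have hv1 : ((v.1 : ℕ) : ZMod A) = p.1.1 := congrArg Prod.fst hv
      have hv2 : ((v.2 : ℕ) : ZMod B) = p.1.2 := congrArg Prod.snd hv
      have hw1 : ((w.1 : ℕ) : ZMod A) = q.1.1 := congrArg Prod.fst hw
      have hw2 : ((w.2 : ℕ) : ZMod B) = q.1.2 := congrArg Prod.snd hw
      have hsum1 : ((v.1 : ℕ) : ZMod A) + p.2.1 = ((w.1 : ℕ) : ZMod A) + q.2.1 := by
        rw [hv1, hw1]
        exact congrArg Prod.fst hsum
      have hsum2 : ((v.2 : ℕ) : ZMod B) + p.2.2 = ((w.2 : ℕ) : ZMod B) + q.2.2 := by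
        rw [hv2, hw2]
        exact congrArg Prod.snd hsum
      rcases key p.2 hpL q.2 hqL hlm with ⟨hd, hne1⟩ | ⟨hd, hne2⟩
      · exact coord_contra A _ ha'A v.1 w.1 v.1.isLt w.1.isLt _ _ hsum1 hd hne1
      · exact coord_contra B _ hb'B v.2 w.2 v.2.isLt w.2.isLt _ _ hsum2 hd hne2
  refine ⟨hpack, ?_⟩
  have hQcard : (cube2 A B (A / Nat.gcd A a) (B / Nat.gcd B b)).card
      = (A / Nat.gcd A a) * (B / Nat.gcd B b) :=
    cube2_card A B _ _ (Nat.div_le_self _ _) (Nat.div_le_self _ _)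
  have hLcard : L.card = a * b := by
    rw [hspec.1, cube2_card A B a b haA hbB]
  have hinj : Set.InjOn (fun p : (ZMod A × ZMod B) × (ZMod A × ZMod B) => p.1 + p.2)
      ((cube2 A B (A / Nat.gcd A a) (B / Nat.gcd B b)) ×ˢ L : Finset _) := by
    intro p hp q hq hfq
    simp only [Finset.coe_product, Set.mem_prod, Finset.mem_coe] at hp hq
    exact hpack (p.1 + p.2) p q ⟨hp.1, hp.2, rfl⟩ ⟨hq.1, hq.2, hfq⟩
  have hle := Finset.card_le_card_of_injOn
    (fun p : (ZMod A × ZMod B) × (ZMod A × ZMod B) => p.1 + p.2)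
    (fun _ _ => Finset.mem_univ _) hinj
  rw [Finset.card_product, hQcard, hLcard, Finset.card_univ, Fintype.card_prod,
    ZMod.card, ZMod.card] at hle
  calc (A / Nat.gcd A a) * (B / Nat.gcd B b) * a * b
      = (A / Nat.gcd A a) * (B / Nat.gcd B b) * (a * b) := by ring
    _ ≤ A * B := hle
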